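/- If π′ ≤ π in the partition lattice P(2K), then 𝔏(T₀^π) ≤ 𝔏(T₀^{π′}), where 𝔏(T) denotes the number of leaves of the forest of two-edge connected components of T (with an isolated two-edge connected component counted as two leaves). -/

import Mathlib

open scoped Classical

/-- A multigraph with edges indexed by `ι`; the `k`-th edge goes from
`(ends k).1` (source) to `(ends k).2` (target).  A *linear graph of order `K`*
in the sense of the paper is an `MGraph (Fin K)`. -/
structure MGraph (ι : Type) where
  V : Type
  [fintV : Fintype V]
  [decV : DecidableEq V]
  ends : ι → V × V

attribute [instance] MGraph.fintV MGraph.decV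

namespace MGraph

variable {ι : Type} [Fintype ι] [DecidableEq ι]

/-- Adjacency using only the edges in `s` (undirected). -/
def adjOn (G : MGraph ι) (s : Set ι) (v w : G.V) : Prop :=
  ∃ e ∈ s, G.ends e = (v, w) ∨ G.ends e = (w, v)

/-- Connectivity (as a setoid) of the subgraph with edge set `s`. -/
def reachSetoid (G : MGraph ι) (s : Set ι) : Setoid G.V :=
  ⟨Relation.EqvGen (G.adjOn s), Relation.EqvGen.is_equivalence _⟩

/-- Number of connected components of the subgraph with edge set `s`
(on the full vertex set). -/
noncomputable def ncomp (G : MGraph ι) (s : Set ι) : ℕ :=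
  Fintype.card (Quotient (G.reachSetoid s))

/-- A cutting edge (bridge): removing it increases the number of connected
components. -/
def IsBridge (G : MGraph ι) (e : ι) : Prop :=
  G.ncomp Set.univ < G.ncomp {x | x ≠ e}

/-- Two vertices are in the same two-edge connected component iff they are
connected using no cutting edge. -/
def tecSetoid (G : MGraph ι) : Setoid G.V := G.reachSetoid {e | ¬ G.IsBridge e}

/-- The forest of two-edge connected components: vertices are the two-edge
connected components, edges are the cutting edges. -/
noncomputable def forest (G : MGraph ι) : MGraph {e : ι // G.IsBridge e} where
  V := Quotient G.tecSetoid
  ends := fun e => (Quotient.mk _ (G.ends e.1).1, Quotient.mk _ (G.ends e.1).2)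

/-- Degree of a vertex (loops counted twice). -/
noncomputable def deg (G : MGraph ι) (v : G.V) : ℕ :=
  (Finset.univ.filter (fun e : ι => (G.ends e).1 = v)).card
  + (Finset.univ.filter (fun e : ι => (G.ends e).2 = v)).card

/-- Number of leaves, with the convention that an isolated vertex counts as
two leaves. -/
noncomputable def leafCount (G : MGraph ι) : ℕ :=
  ∑ v : G.V, if G.deg v = 0 then 2 else if G.deg v = 1 then 1 else 0

/-- `𝔏(G)`: the number of leaves of the forest of two-edge connected
components of `G` (an isolated two-edge connected component counts twice). -/
noncomputable def LL (G : MGraph ι) : ℕ := G.forest.leafCount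

/-- The quotient graph of `G` by a partition (setoid) of its vertex set. -/
noncomputable def quot (G : MGraph ι) (s : Setoid G.V) : MGraph ι where
  V := Quotient s
  ends := fun e => (Quotient.mk s (G.ends e).1, Quotient.mk s (G.ends e).2)

end MGraph

/-- The minimal linear graph `T₀` of order `K`: vertex set `[2K]` is encoded as
`Fin K ⊕ Fin K` (targets `1,…,K` on the left, sources `K+1,…,2K` on the
right), the `k`-th edge going from `K+k` to `k`. -/
def T0 (K : ℕ) : MGraph (Fin K) where
  V := Fin K ⊕ Fin K
  ends := fun k => (Sum.inr k, Sum.inl k)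

namespace MGraph

/-- The elementary linear form `Tr_{N,T}` of a linear graph `T` of order `K`,
evaluated on the elementary tensor `A₁ ⊗ ⋯ ⊗ A_K`. -/
noncomputable def gTrace {K : ℕ} (G : MGraph (Fin K)) (N : ℕ)
    (A : Fin K → Matrix (Fin N) (Fin N) ℂ) : ℂ :=
  ∑ φ : G.V → Fin N, ∏ k : Fin K, A k (φ (G.ends k).2) (φ (G.ends k).1)

/-- The injective linear form `Tr⁰_{N,T}`: only injective maps `φ : V → [N]`
are summed. -/
noncomputable def gTrace0 {K : ℕ} (G : MGraph (Fin K)) (N : ℕ)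
    (A : Fin K → Matrix (Fin N) (Fin N) ℂ) : ℂ :=
  ∑ φ : G.V → Fin N,
    if Function.Injective φ then ∏ k : Fin K, A k (φ (G.ends k).2) (φ (G.ends k).1) else 0

end MGraph

/-- All partitions of a finite set, as setoids. -/
noncomputable instance setoidFintype (V : Type*) [Fintype V] [DecidableEq V] :
    Fintype (Setoid V) :=
  Fintype.ofSurjective (fun g : V → V => Setoid.ker g)
    (fun s => ⟨fun v => (Quotient.mk s v).out, Setoid.ext fun x y => by
      constructor
      · intro h
        have h2 : Quotient.mk s x = Quotient.mk s y := by
          have hx := Quotient.out_eq (Quotient.mk s x)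
          have hy := Quotient.out_eq (Quotient.mk s y)
          rw [← hx, ← hy]
          exact congrArg (Quotient.mk s) h
        exact Quotient.exact h2
      · intro h
        show (Quotient.mk s x).out = (Quotient.mk s y).out
        rw [Quotient.sound h]⟩)


namespace MGraph

variable {ι : Type} [Fintype ι] [DecidableEq ι]

lemma reach_mono (G : MGraph ι) {s t : Set ι} (hst : s ⊆ t) {v w : G.V}
    (h : (G.reachSetoid s) v w) : (G.reachSetoid t) v w :=
  Relation.EqvGen.mono (r := G.adjOn s) (p := G.adjOn t) (fun a b hab => by
    obtain ⟨e, he, hh⟩ := hab; exact ⟨e, hst he, hh⟩) _ _ h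

lemma card_quot_le {V : Type} [Fintype V] (σ τ : Setoid V)
    (h : ∀ a b, σ a b → τ a b) :
    Fintype.card (Quotient τ) ≤ Fintype.card (Quotient σ) :=
  Fintype.card_le_of_surjective
    (fun x => Quotient.liftOn' x (fun v => Quotient.mk τ v)
      (fun a b hab => Quotient.sound' (h a b hab)))
    (fun q => Quotient.inductionOn q fun v => ⟨Quotient.mk σ v, rfl⟩)

lemma card_quot_lt {V : Type} [Fintype V] (σ τ : Setoid V)
    (h : ∀ a b, σ a b → τ a b) {a b : V} (hab : τ a b) (hnab : ¬ σ a b) :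
    Fintype.card (Quotient τ) < Fintype.card (Quotient σ) := by
  set F : Quotient σ → Quotient τ := fun x => Quotient.liftOn' x (fun v => Quotient.mk τ v)
      (fun a b hab => Quotient.sound' (h a b hab)) with hF
  have hsurj : Function.Surjective F :=
    fun q => Quotient.inductionOn q fun v => ⟨Quotient.mk σ v, rfl⟩
  have hle := Fintype.card_le_of_surjective F hsurj
  rcases lt_or_eq_of_le hle with h' | h'
  · exact h'
  · exfalso
    have hbij : Function.Bijective F :=
      (Fintype.bijective_iff_surjective_and_card F).2 ⟨hsurj, h'.symm⟩
    have heq : Quotient.mk σ a = Quotient.mk σ b := by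
      apply hbij.1
      show Quotient.mk τ a = Quotient.mk τ b
      exact Quotient.sound' hab
    exact hnab (Quotient.exact' heq)

lemma ncomp_lt_of_not_reach (G : MGraph ι) {s t : Set ι} (hst : s ⊆ t) {a b : G.V}
    (hab : (G.reachSetoid t) a b) (hnab : ¬ (G.reachSetoid s) a b) :
    G.ncomp t < G.ncomp s :=
  card_quot_lt _ _ (fun _ _ hr => G.reach_mono hst hr) hab hnab

lemma isBridge_iff (G : MGraph ι) (e : ι) :
    G.IsBridge e ↔ ¬ (G.reachSetoid {x | x ≠ e}) (G.ends e).1 (G.ends e).2 := by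
  constructor
  · intro hb hr
    have hss : ∀ v w : G.V, (G.reachSetoid Set.univ) v w → (G.reachSetoid {x | x ≠ e}) v w := by
      intro v w hvw
      induction hvw with
      | rel a b hab =>
        obtain ⟨e', _, h'⟩ := hab
        by_cases hee : e' = e
        · subst hee
          rcases h' with h' | h'
          · rw [h'] at hr; exact hr
          · rw [h'] at hr; exact Relation.EqvGen.symm _ _ hr
        · exact Relation.EqvGen.rel _ _ ⟨e', hee, h'⟩
      | refl a => exact Relation.EqvGen.refl a
      | symm a b _ ih => exact Relation.EqvGen.symm a b ih
      | trans a b c _ _ ih1 ih2 => exact Relation.EqvGen.trans a b c ih1 ih2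
    have h1 : G.ncomp {x | x ≠ e} ≤ G.ncomp Set.univ := card_quot_le _ _ hss
    exact absurd hb (not_lt.2 h1)
  · intro hn
    refine G.ncomp_lt_of_not_reach (fun x _ => Set.mem_univ x) ?_ hn
    exact Relation.EqvGen.rel _ _ ⟨e, Set.mem_univ e, Or.inl Prod.mk.eta.symm⟩

lemma ncomp_remove_lt (G : MGraph ι) {t : Set ι} {e : ι} (het : e ∈ t) (hb : G.IsBridge e) :
    G.ncomp t < G.ncomp (t \ {e}) := by
  have hn := (G.isBridge_iff e).1 hb
  refine G.ncomp_lt_of_not_reach (a := (G.ends e).1) (b := (G.ends e).2)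
    Set.diff_subset ?_ ?_
  · exact Relation.EqvGen.rel _ _ ⟨e, het, Or.inl Prod.mk.eta.symm⟩
  · intro hcon
    exact hn (G.reach_mono (fun x hx => by simpa using hx.2) hcon)

lemma ncomp_remove_finset (G : MGraph ι) (D : Finset ι) :
    ∀ t : Set ι, (∀ e ∈ D, G.IsBridge e) → ↑D ⊆ t →
      G.ncomp t + D.card ≤ G.ncomp (t \ ↑D) := by
  induction D using Finset.induction_on with
  | empty => intro t _ _; simp
  | @insert e D he ih =>
    intro t hD hDt
    have h1 := ih t (fun x hx => hD x (Finset.mem_insert_of_mem hx))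
      (fun x hx => hDt (by simp only [Finset.coe_insert, Set.mem_insert_iff]; right; exact hx))
    have he' : e ∈ t \ (↑D : Set ι) :=
      ⟨hDt (by simp), by simpa using he⟩
    have h2 := G.ncomp_remove_lt he' (hD e (Finset.mem_insert_self e D))
    have hset : (t \ ↑D) \ {e} = t \ ↑(insert e D) := by
      ext x
      simp only [Set.mem_diff, Set.mem_singleton_iff, Finset.coe_insert, Set.mem_insert_iff,
        Finset.mem_coe]
      tauto
    rw [Finset.card_insert_of_notMem he, ← hset]
    omega

lemma tec_of_not_bridge (G : MGraph ι) {e : ι} (h : ¬ G.IsBridge e) :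
    (G.tecSetoid) (G.ends e).1 (G.ends e).2 :=
  Relation.EqvGen.rel _ _ ⟨e, h, Or.inl Prod.mk.eta.symm⟩

lemma bridge_cls_ne (G : MGraph ι) {e : ι} (h : G.IsBridge e) :
    (Quotient.mk G.tecSetoid (G.ends e).1) ≠ Quotient.mk G.tecSetoid (G.ends e).2 := by
  intro heq
  have hr : (G.tecSetoid) (G.ends e).1 (G.ends e).2 := Quotient.exact' heq
  refine (G.isBridge_iff e).1 h (G.reach_mono ?_ hr)
  intro x hx hxe
  exact hx (hxe ▸ h)

lemma internal_bound (G : MGraph ι) (S : Finset (Quotient G.tecSetoid)) (hS : S.Nonempty) :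
    (Finset.univ.filter (fun e : ι => G.IsBridge e ∧
        Quotient.mk G.tecSetoid (G.ends e).1 ∈ S ∧
        Quotient.mk G.tecSetoid (G.ends e).2 ∈ S)).card + 1 ≤ S.card := by
  classical
  set D := Finset.univ.filter (fun e : ι => G.IsBridge e ∧
        Quotient.mk G.tecSetoid (G.ends e).1 ∈ S ∧
        Quotient.mk G.tecSetoid (G.ends e).2 ∈ S) with hDdef
  set NB : Set ι := {e | ¬ G.IsBridge e} with hNBdef
  set t : Set ι := NB ∪ ↑D with htdef
  have hDb : ∀ e ∈ D, G.IsBridge e := fun e he => ((Finset.mem_filter.1 he).2).1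
  have h6 : G.ncomp t + D.card ≤ G.ncomp (t \ ↑D) :=
    G.ncomp_remove_finset D t hDb Set.subset_union_right
  have hteq : t \ ↑D = NB := by
    ext x
    constructor
    · rintro ⟨hx, hxD⟩
      rcases hx with hh | hh
      · exact hh
      · exact absurd hh hxD
    · intro hx
      exact ⟨Or.inl hx, fun hxD => hx (hDb x hxD)⟩
  have hNB : G.ncomp NB = S.card + Sᶜ.card := by
    have h1 : G.ncomp NB = Fintype.card (Quotient G.tecSetoid) := rfl
    rw [h1, ← Finset.card_add_card_compl S]
  obtain ⟨v₀, hv₀⟩ := hS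
  have hlow : Sᶜ.card + 1 ≤ G.ncomp t := by
    set ψ : Quotient G.tecSetoid → Quotient (G.reachSetoid t) :=
      fun x => Quotient.liftOn' x (fun v => Quotient.mk _ v)
        (fun a b hab => Quotient.sound' (G.reach_mono Set.subset_union_left hab)) with hψ
    have key : ∀ a b : G.V, (G.reachSetoid t) a b →
        (G.tecSetoid) a b ∨
          (Quotient.mk G.tecSetoid a ∈ S ∧ Quotient.mk G.tecSetoid b ∈ S) := by
      intro a b hrab
      induction hrab with
      | rel a b hab =>
        obtain ⟨e, he, h'⟩ := hab
        rcases he with he | he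
        · exact Or.inl (Relation.EqvGen.rel _ _ ⟨e, he, h'⟩)
        · have hme := (Finset.mem_filter.1 (Finset.mem_coe.1 he)).2
          right
          rcases h' with h' | h'
          · have e1 : (G.ends e).1 = a := by rw [h']
            have e2 : (G.ends e).2 = b := by rw [h']
            rw [e1, e2] at hme
            exact ⟨hme.2.1, hme.2.2⟩
          · have e1 : (G.ends e).1 = b := by rw [h']
            have e2 : (G.ends e).2 = a := by rw [h']
            rw [e1, e2] at hme
            exact ⟨hme.2.2, hme.2.1⟩
      | refl a => exact Or.inl (Relation.EqvGen.refl a)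
      | symm a b _ ih =>
        rcases ih with ih | ih
        · exact Or.inl (Relation.EqvGen.symm _ _ ih)
        · exact Or.inr ⟨ih.2, ih.1⟩
      | trans a b c _ _ ih1 ih2 =>
        rcases ih1 with h1 | h1 <;> rcases ih2 with h2 | h2
        · exact Or.inl (Relation.EqvGen.trans _ _ _ h1 h2)
        · right
          have hq : Quotient.mk G.tecSetoid a = Quotient.mk G.tecSetoid b := Quotient.sound' h1
          exact ⟨hq ▸ h2.1, h2.2⟩
        · right
          have hq : Quotient.mk G.tecSetoid b = Quotient.mk G.tecSetoid c := Quotient.sound' h2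
          exact ⟨h1.1, hq ▸ h1.2⟩
        · exact Or.inr ⟨h1.1, h2.2⟩
    have hinj : Set.InjOn ψ ↑(insert v₀ Sᶜ) := by
      intro x hx y hy hxy
      obtain ⟨a, rfl⟩ := Quotient.exists_rep x
      obtain ⟨b, rfl⟩ := Quotient.exists_rep y
      have hr : (G.reachSetoid t) a b := Quotient.exact' hxy
      rcases key a b hr with hk | ⟨h1, h2⟩
      · exact Quotient.sound' hk
      · have hx' : (⟦a⟧ : Quotient G.tecSetoid) = v₀ := by
          rcases Finset.mem_insert.1 (Finset.mem_coe.1 hx) with hh | hh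
          · exact hh
          · exact absurd h1 (Finset.mem_compl.1 hh)
        have hy' : (⟦b⟧ : Quotient G.tecSetoid) = v₀ := by
          rcases Finset.mem_insert.1 (Finset.mem_coe.1 hy) with hh | hh
          · exact hh
          · exact absurd h2 (Finset.mem_compl.1 hh)
        rw [hx', hy']
    have hcard := Finset.card_le_card_of_injOn ψ (fun x _ => Finset.mem_univ _) hinj
    rw [Finset.card_insert_of_notMem (by simp [hv₀])] at hcard
    simpa [ncomp] using hcard
  rw [hteq] at h6
  omega

lemma card_filter_subtype {P : ι → Prop} (Q : ι → Prop) [Fintype {e : ι // P e}]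
    [DecidablePred (fun e : {e : ι // P e} => Q e.1)]
    [DecidablePred (fun e : ι => P e ∧ Q e)] :
    (Finset.univ.filter (fun e : {e : ι // P e} => Q e.1)).card
      = (Finset.univ.filter (fun e : ι => P e ∧ Q e)).card := by
  refine Finset.card_bij (fun e _ => e.1) ?_ ?_ ?_
  · intro a ha
    simp only [Finset.mem_filter, Finset.mem_univ, true_and] at ha ⊢
    exact ⟨a.2, ha⟩
  · intro a _ b _ hab
    exact Subtype.ext hab
  · intro b hb
    simp only [Finset.mem_filter, Finset.mem_univ, true_and] at hb
    exact ⟨⟨b, hb.1⟩, by simp [hb.2], rfl⟩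

lemma deg_forest (G : MGraph ι) (v : Quotient G.tecSetoid) :
    G.forest.deg v
      = (Finset.univ.filter (fun e : ι => G.IsBridge e ∧
            Quotient.mk G.tecSetoid (G.ends e).1 = v)).card
      + (Finset.univ.filter (fun e : ι => G.IsBridge e ∧
            Quotient.mk G.tecSetoid (G.ends e).2 = v)).card := by
  show (Finset.univ.filter (fun e : {e : ι // G.IsBridge e} =>
          Quotient.mk G.tecSetoid (G.ends e.1).1 = v)).card
      + (Finset.univ.filter (fun e : {e : ι // G.IsBridge e} =>
          Quotient.mk G.tecSetoid (G.ends e.1).2 = v)).card = _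
  exact congrArg₂ (· + ·)
    (card_filter_subtype (P := G.IsBridge)
      (fun e => Quotient.mk G.tecSetoid (G.ends e).1 = v))
    (card_filter_subtype (P := G.IsBridge)
      (fun e => Quotient.mk G.tecSetoid (G.ends e).2 = v))

lemma sum_card_filter_eq {β : Type} [Fintype β] [DecidableEq β]
    (P : ι → Prop) (g : ι → β) (S : Finset β) :
    ∑ v ∈ S, (Finset.univ.filter (fun e : ι => P e ∧ g e = v)).card
      = (Finset.univ.filter (fun e : ι => P e ∧ g e ∈ S)).card := by
  classical
  simp only [Finset.card_filter]
  rw [Finset.sum_comm]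
  refine Finset.sum_congr rfl ?_
  intro e _
  by_cases hP : P e
  · simp only [hP, true_and]
    exact Finset.sum_ite_eq S (g e) (fun _ => 1)
  · simp [hP]

lemma card_filter_split (P Q : ι → Prop) :
    (Finset.univ.filter (fun e : ι => P e)).card
      = (Finset.univ.filter (fun e : ι => P e ∧ Q e)).card
        + (Finset.univ.filter (fun e : ι => P e ∧ ¬ Q e)).card := by
  classical
  have h := Finset.card_filter_add_card_filter_not
    (s := Finset.univ.filter (fun e : ι => P e)) (p := fun e => Q e)
  rw [Finset.filter_filter, Finset.filter_filter] at h
  exact h.symm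

lemma LL_le_of_surjective (A B : MGraph ι) (f : A.V → B.V) (hf : Function.Surjective f)
    (hends : ∀ e, B.ends e = (f (A.ends e).1, f (A.ends e).2)) : B.LL ≤ A.LL := by
  classical
  have push : ∀ (s : Set ι) (v w : A.V),
      (A.reachSetoid s) v w → (B.reachSetoid s) (f v) (f w) := by
    intro s v w hvw
    induction hvw with
    | rel a b hab =>
      obtain ⟨e, he, h'⟩ := hab
      refine Relation.EqvGen.rel _ _ ⟨e, he, ?_⟩
      rcases h' with h' | h'
      · left; rw [hends e, h']
      · right; rw [hends e, h']
    | refl a => exact Relation.EqvGen.refl _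
    | symm a b _ ih => exact Relation.EqvGen.symm _ _ ih
    | trans a b c _ _ ih1 ih2 => exact Relation.EqvGen.trans _ _ _ ih1 ih2
  have hbr : ∀ e, B.IsBridge e → A.IsBridge e := by
    intro e hb
    by_contra hA
    have h1 : (A.reachSetoid {x | x ≠ e}) (A.ends e).1 (A.ends e).2 :=
      not_not.1 (fun hcon => hA ((A.isBridge_iff e).2 hcon))
    have h2 := push {x | x ≠ e} _ _ h1
    refine (B.isBridge_iff e).1 hb ?_
    rw [hends e]
    exact h2
  have htec : ∀ v w : A.V, (A.tecSetoid) v w → (B.tecSetoid) (f v) (f w) := by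
    intro v w hvw
    refine B.reach_mono ?_ (push {e | ¬ A.IsBridge e} v w hvw)
    intro e he hbe
    exact he (hbr e hbe)
  set F : Quotient A.tecSetoid → Quotient B.tecSetoid :=
    fun x => Quotient.liftOn' x (fun v => Quotient.mk B.tecSetoid (f v))
      (fun a b hab => Quotient.sound' (htec a b hab)) with hFdef
  have hFsurj : Function.Surjective F := by
    intro u
    obtain ⟨b, rfl⟩ := Quotient.exists_rep u
    obtain ⟨a, rfl⟩ := hf b
    exact ⟨Quotient.mk A.tecSetoid a, rfl⟩
  have hcls1 : ∀ e, Quotient.mk B.tecSetoid (B.ends e).1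
      = F (Quotient.mk A.tecSetoid (A.ends e).1) := by
    intro e; rw [hends e]; rfl
  have hcls2 : ∀ e, Quotient.mk B.tecSetoid (B.ends e).2
      = F (Quotient.mk A.tecSetoid (A.ends e).2) := by
    intro e; rw [hends e]; rfl
  have main : ∀ u : Quotient B.tecSetoid,
      (if B.forest.deg u = 0 then 2 else if B.forest.deg u = 1 then 1 else 0)
        ≤ ∑ v ∈ Finset.univ.filter (fun v : Quotient A.tecSetoid => F v = u),
            (if A.forest.deg v = 0 then 2 else if A.forest.deg v = 1 then 1 else 0) := by
    intro u
    set S := Finset.univ.filter (fun v : Quotient A.tecSetoid => F v = u) with hSdef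
    have hmemS : ∀ v, v ∈ S ↔ F v = u := fun v => by simp [hSdef]
    have hSne : S.Nonempty := by
      obtain ⟨v, hv⟩ := hFsurj u
      exact ⟨v, (hmemS v).2 hv⟩
    set g1 : ι → Quotient A.tecSetoid := fun e => Quotient.mk A.tecSetoid (A.ends e).1 with hg1
    set g2 : ι → Quotient A.tecSetoid := fun e => Quotient.mk A.tecSetoid (A.ends e).2 with hg2
    set n11 := (Finset.univ.filter (fun e : ι =>
        (A.IsBridge e ∧ F (g1 e) = u) ∧ F (g2 e) = u)).card with hn11
    set n10 := (Finset.univ.filter (fun e : ι =>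
        (A.IsBridge e ∧ F (g1 e) = u) ∧ ¬ F (g2 e) = u)).card with hn10
    set n01 := (Finset.univ.filter (fun e : ι =>
        (A.IsBridge e ∧ F (g2 e) = u) ∧ ¬ F (g1 e) = u)).card with hn01
    set n11' := (Finset.univ.filter (fun e : ι =>
        (A.IsBridge e ∧ F (g2 e) = u) ∧ F (g1 e) = u)).card with hn11'
    have hn11eq : n11' = n11 := by
      rw [hn11, hn11']
      congr 1
      apply Finset.filter_congr
      intro e _
      tauto
    -- internal bound
    have hIc : n11 + 1 ≤ S.card := by
      have hb := A.internal_bound S hSne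
      have hrw : (Finset.univ.filter (fun e : ι => A.IsBridge e ∧
          Quotient.mk A.tecSetoid (A.ends e).1 ∈ S ∧
          Quotient.mk A.tecSetoid (A.ends e).2 ∈ S)).card = n11 := by
        rw [hn11]
        congr 1
        apply Finset.filter_congr
        intro e _
        simp only [hmemS]
        tauto
      rw [hrw] at hb
      exact hb
    -- sum of degrees over S
    have hdegsum : ∑ v ∈ S, A.forest.deg v = 2 * n11 + n10 + n01 := by
      have h1 : ∑ v ∈ S, A.forest.deg v
          = (Finset.univ.filter (fun e : ι => A.IsBridge e ∧ g1 e ∈ S)).card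
            + (Finset.univ.filter (fun e : ι => A.IsBridge e ∧ g2 e ∈ S)).card := by
        simp only [deg_forest, Finset.sum_add_distrib]
        rw [sum_card_filter_eq (fun e => A.IsBridge e) g1 S,
          sum_card_filter_eq (fun e => A.IsBridge e) g2 S]
      have h2 : (Finset.univ.filter (fun e : ι => A.IsBridge e ∧ g1 e ∈ S)).card
          = n11 + n10 := by
        have hsplit := Finset.card_filter_add_card_filter_not
          (s := Finset.univ.filter (fun e : ι => A.IsBridge e ∧ g1 e ∈ S))
          (p := fun e => F (g2 e) = u)
        rw [Finset.filter_filter, Finset.filter_filter] at hsplit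
        rw [hn11, hn10, ← hsplit]
        congr 1 <;>
          · refine congrArg Finset.card ?_
            apply Finset.filter_congr
            intro e _
            simp only [hmemS]
      have h3 : (Finset.univ.filter (fun e : ι => A.IsBridge e ∧ g2 e ∈ S)).card
          = n11 + n01 := by
        have hsplit := Finset.card_filter_add_card_filter_not
          (s := Finset.univ.filter (fun e : ι => A.IsBridge e ∧ g2 e ∈ S))
          (p := fun e => F (g1 e) = u)
        rw [Finset.filter_filter, Finset.filter_filter] at hsplit
        rw [← hn11eq, hn11', hn01, ← hsplit]
        congr 1 <;>
          · refine congrArg Finset.card ?_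
            apply Finset.filter_congr
            intro e _
            simp only [hmemS]
      rw [h1, h2, h3]
      ring
    -- B degree
    have hdegB : B.forest.deg u = n10 + n01 := by
      rw [B.deg_forest u]
      have h1 : (Finset.univ.filter (fun e : ι => B.IsBridge e ∧
          Quotient.mk B.tecSetoid (B.ends e).1 = u)).card = n10 := by
        rw [hn10]
        congr 1
        ext e
        simp only [Finset.mem_filter, Finset.mem_univ, true_and, hcls1, hcls2]
        constructor
        · rintro ⟨hbe, h1⟩
          have hne := B.bridge_cls_ne hbe
          rw [hcls1, hcls2] at hne
          exact ⟨⟨hbr e hbe, h1⟩, fun hc => hne (h1.trans hc.symm)⟩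
        · rintro ⟨⟨hba, h1⟩, h2⟩
          refine ⟨?_, h1⟩
          by_contra hnb
          have hq : Quotient.mk B.tecSetoid (B.ends e).1
              = Quotient.mk B.tecSetoid (B.ends e).2 :=
            Quotient.sound' (B.tec_of_not_bridge hnb)
          rw [hcls1, hcls2] at hq
          exact h2 (hq ▸ h1)
      have h2 : (Finset.univ.filter (fun e : ι => B.IsBridge e ∧
          Quotient.mk B.tecSetoid (B.ends e).2 = u)).card = n01 := by
        rw [hn01]
        congr 1
        ext e
        simp only [Finset.mem_filter, Finset.mem_univ, true_and]
        constructor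
        · rintro ⟨hbe, h1⟩
          rw [hcls2] at h1
          have hne := B.bridge_cls_ne hbe
          rw [hcls1, hcls2] at hne
          exact ⟨⟨hbr e hbe, h1⟩, fun hc => hne (hc.trans h1.symm)⟩
        · rintro ⟨⟨hba, h1⟩, h2⟩
          rw [hcls2]
          refine ⟨?_, h1⟩
          by_contra hnb
          have hq : Quotient.mk B.tecSetoid (B.ends e).1
              = Quotient.mk B.tecSetoid (B.ends e).2 :=
            Quotient.sound' (B.tec_of_not_bridge hnb)
          rw [hcls1, hcls2] at hq
          exact h2 (hq.symm ▸ h1)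
      rw [h1, h2]
    -- arithmetic
    have hpt : ∀ v ∈ S, 2 ≤
        (if A.forest.deg v = 0 then 2 else if A.forest.deg v = 1 then 1 else 0)
          + A.forest.deg v := by
      intro v _
      split_ifs <;> omega
    have hsum : ∑ _v ∈ S, 2 ≤ ∑ v ∈ S,
        ((if A.forest.deg v = 0 then 2 else if A.forest.deg v = 1 then 1 else 0)
          + A.forest.deg v) := Finset.sum_le_sum hpt
    simp only [Finset.sum_add_distrib, Finset.sum_const, smul_eq_mul, hdegsum] at hsum
    have hdist : ∑ v ∈ S,
        ((if A.forest.deg v = 0 then 2 else if A.forest.deg v = 1 then 1 else 0)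
          + A.forest.deg v) = ∑ v ∈ S,
        (if A.forest.deg v = 0 then 2 else if A.forest.deg v = 1 then 1 else 0)
          + ∑ v ∈ S, A.forest.deg v := Finset.sum_add_distrib
    rw [hdegsum] at hdist
    rw [hdegB]
    split_ifs with h0 h1 <;> omega
  have hfib := Finset.sum_fiberwise (Finset.univ : Finset (Quotient A.tecSetoid)) F
    (fun v => if A.forest.deg v = 0 then 2 else if A.forest.deg v = 1 then (1 : ℕ) else 0)
  calc B.LL = ∑ u : Quotient B.tecSetoid,
        (if B.forest.deg u = 0 then 2 else if B.forest.deg u = 1 then 1 else 0) := rfl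
    _ ≤ ∑ u : Quotient B.tecSetoid,
        ∑ v ∈ Finset.univ.filter (fun v : Quotient A.tecSetoid => F v = u),
          (if A.forest.deg v = 0 then 2 else if A.forest.deg v = 1 then 1 else 0) :=
        Finset.sum_le_sum (fun u _ => main u)
    _ = ∑ v : Quotient A.tecSetoid,
        (if A.forest.deg v = 0 then 2 else if A.forest.deg v = 1 then 1 else 0) := hfib
    _ = A.LL := rfl

end MGraph

/-- If `π′ ≤ π` in the partition lattice `P(2K)` (refinement order), then
`𝔏(T₀^π) ≤ 𝔏(T₀^{π′})`, where `𝔏` is the number of leaves of the forest of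
two-edge connected components. -/
theorem leaves_antitone_of_refinement (K : ℕ)
    (π π' : Setoid ((T0 K).V)) (h : π' ≤ π) :
    ((T0 K).quot π).LL ≤ ((T0 K).quot π').LL := by
  refine MGraph.LL_le_of_surjective ((T0 K).quot π') ((T0 K).quot π)
    (fun x => Quotient.liftOn' x (fun v => Quotient.mk π v)
      (fun a b hab => Quotient.sound' (h hab))) ?_ ?_
  · intro q
    obtain ⟨a, rfl⟩ := Quotient.exists_rep q
    exact ⟨Quotient.mk π' a, rfl⟩
  · intro e
    rfl
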